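/- Let R be a commutative Noetherian ring, 𝔞 an ideal, and x₁,…,x_l ∈ R. Then x₁,…,x_l is an 𝔞-filter regular sequence (i.e. some power of 𝔞 annihilates ((Σ_{i<j} x_i R):x_j)/(Σ_{i<j} x_i R) for all j = 1,…,l) if and only if for every prime 𝔭 not containing 𝔞, the images of x₁,…,x_l in R_𝔭 form a possibly improper regular sequence. -/

import Mathlib

/-- `y₁,…,y_l` is an `𝔞`-filter regular sequence: some power `𝔞^m` annihilates
`((y₁,…,y_j) : y_{j+1})/(y₁,…,y_j)` for all `j` (0-based). -/
def IsFilterRegular {R : Type*} [CommRing R] {l : ℕ} (𝔞 : Ideal R) (y : Fin l → R) : Prop :=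
  ∃ m : ℕ, ∀ j : Fin l,
    𝔞 ^ m * ((Ideal.span (y '' {i | i < j})).colon (Ideal.span {y j})) ≤
      Ideal.span (y '' {i | i < j})

private lemma span_image_eq_map {R : Type*} [CommRing R] {l : ℕ} (x : Fin l → R)
    (𝔭 : Ideal R) [𝔭.IsPrime] (j : Fin l) :
    Ideal.span ((fun i => algebraMap R (Localization.AtPrime 𝔭) (x i)) '' {i | i < j}) =
      (Ideal.span (x '' {i | i < j})).map (algebraMap R (Localization.AtPrime 𝔭)) := by
  rw [Ideal.map_span, Set.image_image]

/-- `x₁,…,x_l` is an `𝔞`-filter regular sequence if and only if, for every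
prime `𝔭` not containing `𝔞`, the images of `x₁,…,x_l` in `R_𝔭` form a possibly improper
regular sequence. -/
theorem isFilterRegular_iff_localization {R : Type*} [CommRing R] [IsNoetherianRing R]
    (𝔞 : Ideal R) {l : ℕ} (x : Fin l → R) :
    IsFilterRegular 𝔞 x ↔
      ∀ (𝔭 : Ideal R) [𝔭.IsPrime], ¬ 𝔞 ≤ 𝔭 →
        ∀ j : Fin l, ∀ z : Localization.AtPrime 𝔭,
          algebraMap R (Localization.AtPrime 𝔭) (x j) * z ∈
              Ideal.span ((fun i => algebraMap R (Localization.AtPrime 𝔭) (x i)) ''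
                {i | i < j}) →
            z ∈ Ideal.span ((fun i => algebraMap R (Localization.AtPrime 𝔭) (x i)) ''
              {i | i < j}) := by
  classical
  constructor
  · rintro ⟨m, hm⟩ 𝔭 _ h𝔭 j z hz
    obtain ⟨a, ha𝔞, ha𝔭⟩ := SetLike.not_le_iff_exists.mp h𝔭
    rw [span_image_eq_map] at hz ⊢
    obtain ⟨⟨r, s⟩, rfl⟩ := IsLocalization.mk'_surjective 𝔭.primeCompl z
    rw [IsLocalization.mul_mk'_eq_mk'_of_mul,
      IsLocalization.mk'_mem_map_algebraMap_iff 𝔭.primeCompl] at hz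
    obtain ⟨t, ht, htI⟩ := hz
    rw [IsLocalization.mk'_mem_map_algebraMap_iff 𝔭.primeCompl]
    refine ⟨a ^ m * t, mul_mem (pow_mem ha𝔭 m) ht, ?_⟩
    have hcolon : t * r ∈ (Ideal.span (x '' {i | i < j})).colon (Ideal.span {x j}) := by
      rw [Ideal.mem_colon_span_singleton]
      have : t * r * x j = t * (x j * r) := by ring
      rw [this]; exact htI
    have := hm j (Ideal.mul_mem_mul (Ideal.pow_mem_pow ha𝔞 m) hcolon)
    have heq : a ^ m * t * r = a ^ m * (t * r) := by ring
    rw [heq]; exact this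
  · intro h
    have key : ∀ j : Fin l, ∃ m : ℕ,
        𝔞 ^ m ≤ (Ideal.span (x '' {i | i < j})).colon
          ((Ideal.span (x '' {i | i < j})).colon (Ideal.span {x j})) := by
      intro j
      set I := Ideal.span (x '' {i | i < j}) with hI
      set C := I.colon (Ideal.span {x j}) with hC
      refine Ideal.exists_pow_le_of_le_radical_of_fg ?_ (IsNoetherian.noetherian 𝔞)
      rw [Ideal.radical_eq_sInf]
      refine le_sInf ?_
      rintro 𝔭 ⟨h𝔭le, h𝔭prime⟩
      by_contra h𝔞𝔭
      -- C is finitely generated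
      obtain ⟨S, hS⟩ := IsNoetherian.noetherian C
      -- for each generator c of C, find t ∉ 𝔭 with t * c ∈ I
      have hgen : ∀ c ∈ S, ∃ t ∈ 𝔭.primeCompl, t * c ∈ I := by
        intro c hc
        have hcC : c ∈ C := hS ▸ Ideal.subset_span hc
        have hcx : c * x j ∈ I := Ideal.mem_colon_span_singleton.mp (hC ▸ hcC)
        have hmap : algebraMap R (Localization.AtPrime 𝔭) (x j) *
            algebraMap R (Localization.AtPrime 𝔭) c ∈
            Ideal.span ((fun i => algebraMap R (Localization.AtPrime 𝔭) (x i)) ''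
              {i | i < j}) := by
          rw [span_image_eq_map, ← map_mul, mul_comm]
          exact Ideal.mem_map_of_mem _ hcx
        have := h 𝔭 h𝔞𝔭 j _ hmap
        rw [span_image_eq_map] at this
        have : IsLocalization.mk' (Localization.AtPrime 𝔭) c (1 : 𝔭.primeCompl) ∈
            I.map (algebraMap R (Localization.AtPrime 𝔭)) := by
          rwa [IsLocalization.mk'_one]
        rwa [IsLocalization.mk'_mem_map_algebraMap_iff 𝔭.primeCompl] at this
      choose t htmem htI using hgen
      set T : R := ∏ c ∈ S.attach, t c.1 c.2 with hT
      have hTmem : T ∈ 𝔭.primeCompl := prod_mem fun c _ => htmem c.1 c.2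
      have hTC : ∀ c ∈ C, T * c ∈ I := by
        intro c hc
        rw [← hS] at hc
        induction hc using Submodule.span_induction with
        | mem y hy =>
          have hyS : y ∈ S := hy
          have hTeq : T = t y hyS * ∏ c ∈ S.attach.erase ⟨y, hyS⟩, t c.1 c.2 := by
            rw [hT, ← Finset.mul_prod_erase S.attach _ (Finset.mem_attach S ⟨y, hyS⟩)]
          rw [hTeq, mul_right_comm]
          exact Ideal.mul_mem_right _ _ (htI y hyS)
        | zero => simp
        | add y z _ _ hy hz => rw [mul_add]; exact I.add_mem hy hz
        | smul r y _ hy =>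
          rw [smul_eq_mul, mul_comm r y, ← mul_assoc]
          exact Ideal.mul_mem_right _ _ hy
      have hTcolon : T ∈ I.colon C := by
        rw [Submodule.mem_colon]
        intro p hp
        rw [smul_eq_mul]
        exact hTC p hp
      exact hTmem (h𝔭le hTcolon)
    choose m hmle using key
    refine ⟨Finset.univ.sup m, fun j => ?_⟩
    rw [Ideal.mul_le]
    intro r hr s hs
    have hr' : r ∈ 𝔞 ^ m j :=
      Ideal.pow_le_pow_right (Finset.le_sup (Finset.mem_univ j)) hr
    have := hmle j hr'
    rw [Submodule.mem_colon] at this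
    have := this s hs
    rwa [smul_eq_mul] at this
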